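/- (Randomized coordinate descent, least-squares version, one-step expected decrease.) Let A be a p×m real matrix with full column rank, B an n×q real matrix with full row rank (so B† = Bᵀ(BBᵀ)⁻¹), and X*, X m×n real matrices with C = AX*B. For i ∈ {1,…,m} set p_i = ‖A_{:,i}‖₂²/‖A‖_F² and define X⁺_i = X − e_i(A_{:,i})ᵀ(AXB − C)B†/‖A_{:,i}‖₂², where e_i is the i-th standard basis column vector of ℝᵐ. Then Σ_{i=1}^{m} p_i ‖X⁺_i − X*‖²_{F(AᵀA)} ≤ (1 − λ_min(AᵀA)/‖A‖_F²)·‖X − X*‖²_{F(AᵀA)}, where ‖M‖²_{F(AᵀA)} = Tr(MᵀAᵀAM). -/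

import Mathlib

open Matrix

private lemma rcd_psd_trace_nonneg {k : ℕ} {P : Matrix (Fin k) (Fin k) ℝ} (hP : P.PosSemidef) :
    0 ≤ P.trace := by
  apply Finset.sum_nonneg
  intro j _
  have := hP.dotProduct_mulVec_nonneg (Pi.single j 1)
  simpa [dotProduct, mulVec, Pi.single_apply] using this

private lemma rcd_full_rank_isUnit {k : ℕ} {M : Matrix (Fin k) (Fin k) ℝ} (h : M.rank = k) :
    IsUnit M := by
  rw [← Matrix.mulVec_surjective_iff_isUnit]
  have : LinearMap.range M.mulVecLin = ⊤ := by
    apply Submodule.eq_top_of_finrank_eq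
    rw [← Matrix.rank, h]
    simp [Module.finrank_pi]
  intro v
  obtain ⟨x, hx⟩ := LinearMap.range_eq_top.mp this v
  exact ⟨x, hx⟩

private lemma rcd_full_col_rank_inj {p m : ℕ} {A : Matrix (Fin p) (Fin m) ℝ} (h : A.rank = m) :
    Function.Injective A.mulVec := by
  have hker : LinearMap.ker A.mulVecLin = ⊥ := by
    have h1 := A.mulVecLin.finrank_range_add_finrank_ker
    rw [← Matrix.rank, h] at h1
    simp [Module.finrank_pi] at h1
    exact h1
  exact LinearMap.ker_eq_bot.mp hker

private lemma rcd_psd_sq_sub_smul {k : ℕ} (hk : 0 < k) {G : Matrix (Fin k) (Fin k) ℝ}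
    (hG : G.IsHermitian) (hpsd : G.PosSemidef) :
    (G * G - (⨅ i, hG.eigenvalues i) • G).PosSemidef := by
  have : Nonempty (Fin k) := ⟨⟨0, hk⟩⟩
  set lam := ⨅ i, hG.eigenvalues i with hlam
  have hle : ∀ i, lam ≤ hG.eigenvalues i := fun i =>
    ciInf_le (Set.Finite.bddBelow (Set.finite_range _)) i
  have h0 : ∀ i, 0 ≤ hG.eigenvalues i := fun i => hpsd.eigenvalues_nonneg i
  set U : Matrix (Fin k) (Fin k) ℝ := (hG.eigenvectorUnitary : Matrix (Fin k) (Fin k) ℝ) with hUdef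
  have hU : star U * U = 1 := Matrix.mem_unitaryGroup_iff'.mp hG.eigenvectorUnitary.2
  have hspec : G = U * diagonal hG.eigenvalues * star U := by
    have := hG.spectral_theorem
    simpa using this
  have e1 : G * G = U * diagonal (fun i => hG.eigenvalues i * hG.eigenvalues i) * star U := by
    conv_lhs => rw [hspec]
    rw [show (U * diagonal hG.eigenvalues * star U) * (U * diagonal hG.eigenvalues * star U)
        = U * (diagonal hG.eigenvalues * ((star U * U) * diagonal hG.eigenvalues)) * star U by
      noncomm_ring]
    rw [hU, one_mul, diagonal_mul_diagonal]
  have e2 : lam • G = U * diagonal (fun i => lam * hG.eigenvalues i) * star U := by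
    conv_lhs => rw [hspec]
    rw [← smul_mul_assoc, ← mul_smul_comm, ← diagonal_smul]
    rfl
  rw [e1, e2, ← Matrix.sub_mul, ← Matrix.mul_sub, diagonal_sub]
  have hdiag : Matrix.PosSemidef (diagonal
      (fun i => hG.eigenvalues i * hG.eigenvalues i - lam * hG.eigenvalues i)) := by
    refine Matrix.posSemidef_diagonal_iff.mpr fun i => ?_
    have : hG.eigenvalues i * hG.eigenvalues i - lam * hG.eigenvalues i
        = (hG.eigenvalues i - lam) * hG.eigenvalues i := by ring
    rw [this]
    exact mul_nonneg (by linarith [hle i]) (h0 i)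
  have := hdiag.mul_mul_conjTranspose_same U
  simpa [Matrix.star_eq_conjTranspose] using this

private lemma rcd_key_trace {k n : ℕ} (G : Matrix (Fin k) (Fin k) ℝ) (hG : Gᵀ = G)
    (E : Matrix (Fin k) (Fin n) ℝ) (i : Fin k) (hg : 0 < G i i) :
    trace ((E - (1 / G i i) • vecMulVec (Pi.single i 1) ((G*E) i))ᵀ * G *
           (E - (1 / G i i) • vecMulVec (Pi.single i 1) ((G*E) i)))
    = trace (Eᵀ * G * E) - (∑ j, ((G*E) i j)^2) / G i i := by
  have hsym : ∀ a b, G a b = G b a := fun a b => (congrFun (congrFun hG b) a : _)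
  set M := vecMulVec (Pi.single i 1) ((G*E) i) with hM
  set c := 1 / G i i with hc
  have t1 : trace (Mᵀ * G * E) = ∑ j, ((G*E) i j)^2 := by
    simp [hM, Matrix.trace, Matrix.diag, Matrix.mul_apply, vecMulVec_apply, transpose_apply,
      Pi.single_apply, ite_mul, mul_ite, zero_mul, mul_zero, Finset.sum_ite_eq,
      Finset.mem_univ, if_true, Finset.sum_mul, Finset.mul_sum, pow_two, mul_assoc]
  have t2 : trace (Eᵀ * G * M) = ∑ j, ((G*E) i j)^2 := by
    simp [hM, Matrix.trace, Matrix.diag, Matrix.mul_apply, vecMulVec_apply, transpose_apply,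
      Pi.single_apply, ite_mul, mul_ite, zero_mul, mul_zero, Finset.sum_ite_eq,
      Finset.mem_univ, if_true, Finset.sum_mul, Finset.mul_sum, pow_two, mul_assoc]
    refine Finset.sum_congr rfl fun x _ => Finset.sum_congr rfl fun x1 _ =>
      Finset.sum_congr rfl fun x2 _ => ?_
    rw [hsym x2 i]; ring
  have t3 : trace (Mᵀ * G * M) = G i i * ∑ j, ((G*E) i j)^2 := by
    simp [hM, Matrix.trace, Matrix.diag, Matrix.mul_apply, vecMulVec_apply, transpose_apply,
      Pi.single_apply, ite_mul, mul_ite, zero_mul, mul_zero, Finset.sum_ite_eq,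
      Finset.mem_univ, if_true, Finset.sum_mul, Finset.mul_sum, pow_two, mul_assoc]
    refine Finset.sum_congr rfl fun x _ => Finset.sum_congr rfl fun x1 _ =>
      Finset.sum_congr rfl fun x2 _ => ?_
    ring
  have expand : (E - c • M)ᵀ * G * (E - c • M)
      = Eᵀ * G * E - c • (Mᵀ * G * E) - c • (Eᵀ * G * M) + (c * c) • (Mᵀ * G * M) := by
    rw [Matrix.transpose_sub, Matrix.transpose_smul]
    simp only [Matrix.sub_mul, Matrix.mul_sub, Matrix.smul_mul, Matrix.mul_smul, smul_sub,
      smul_add, smul_smul]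
    abel
  rw [expand]
  rw [Matrix.trace_add, Matrix.trace_sub, Matrix.trace_sub, Matrix.trace_smul, Matrix.trace_smul,
    Matrix.trace_smul, t1, t2, t3]
  simp only [smul_eq_mul]
  rw [hc]
  have final : ∀ (t S g : ℝ), g ≠ 0 →
      t - (1/g)*S - (1/g)*S + ((1/g)*(1/g))*(g*S) = t - S/g := by
    intro t S g hgne
    field_simp
    ring
  exact final _ _ _ hg.ne'

/-- randomized coordinate descent, least-squares version (RCD),
one-step expected decrease in the `AᵀA`-weighted Frobenius norm. -/
theorem stmt_17 {m n p q : ℕ}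
    (A : Matrix (Fin p) (Fin m) ℝ) (hA : A.rank = m)
    (B : Matrix (Fin n) (Fin q) ℝ) (hB : B.rank = n)
    (Xs X : Matrix (Fin m) (Fin n) ℝ) :
    let C : Matrix (Fin p) (Fin q) ℝ := A * Xs * B
    let Bd : Matrix (Fin q) (Fin n) ℝ := Bᵀ * (B * Bᵀ)⁻¹
    let Xp : Fin m → Matrix (Fin m) (Fin n) ℝ := fun i =>
      X - (1 / (Aᵀ i ⬝ᵥ Aᵀ i)) •
        vecMulVec (Pi.single i 1) ((Aᵀ i ᵥ* (A * X * B - C)) ᵥ* Bd)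
    ∀ (hAA : (Aᵀ * A).IsHermitian),
      ∑ i, ((Aᵀ i ⬝ᵥ Aᵀ i) / Matrix.trace (Aᵀ * A)) *
          Matrix.trace ((Xp i - Xs)ᵀ * (Aᵀ * A) * (Xp i - Xs))
      ≤ (1 - (⨅ k, hAA.eigenvalues k) / Matrix.trace (Aᵀ * A)) *
          Matrix.trace ((X - Xs)ᵀ * (Aᵀ * A) * (X - Xs)) := by
  intro C Bd Xp hAA
  have hC : C = A * Xs * B := rfl
  have hBd : Bd = Bᵀ * (B * Bᵀ)⁻¹ := rfl
  have hXp : ∀ i, Xp i = X - (1 / (Aᵀ i ⬝ᵥ Aᵀ i)) •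
      vecMulVec (Pi.single i 1) ((Aᵀ i ᵥ* (A * X * B - C)) ᵥ* Bd) := fun i => rfl
  rcases Nat.eq_zero_or_pos m with hm | hm
  · subst hm
    have hzero : (X - Xs)ᵀ * (Aᵀ * A) * (X - Xs) = 0 := by
      ext a b
      simp [Matrix.mul_apply]
    simp [hzero]
  have hne : Nonempty (Fin m) := ⟨⟨0, hm⟩⟩
  set E := X - Xs with hE
  set G := Aᵀ * A with hGdef
  have hGsym : Gᵀ = G := by
    rw [← Matrix.conjTranspose_eq_transpose_of_trivial]
    exact hAA
  have hGpsd : G.PosSemidef := by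
    rw [hGdef, ← Matrix.conjTranspose_eq_transpose_of_trivial A]
    exact Matrix.posSemidef_conjTranspose_mul_self A
  have hAinj : Function.Injective A.mulVec := rcd_full_col_rank_inj hA
  -- positivity of the column norms
  have hcol : ∀ i, A.mulVec (Pi.single i 1) = Aᵀ i := by
    intro i; funext kk
    simp [Matrix.mulVec, dotProduct, Pi.single_apply]
  have hgpos : ∀ i, 0 < Aᵀ i ⬝ᵥ Aᵀ i := by
    intro i
    have hnz : Aᵀ i ≠ 0 := by
      intro h0
      have : A.mulVec (Pi.single i 1) = A.mulVec 0 := by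
        rw [hcol i, h0, Matrix.mulVec_zero]
      have h1 := hAinj this
      have := congrFun h1 i
      simp at this
    have hnn : 0 ≤ Aᵀ i ⬝ᵥ Aᵀ i :=
      Finset.sum_nonneg fun j _ => mul_self_nonneg _
    rcases hnn.lt_or_eq with h | h
    · exact h
    · exact absurd (dotProduct_self_eq_zero.mp h.symm) hnz
  have hGdiag : ∀ i, G i i = Aᵀ i ⬝ᵥ Aᵀ i := by
    intro i
    simp [hGdef, Matrix.mul_apply, dotProduct, Matrix.transpose_apply]
  have hgpos' : ∀ i, 0 < G i i := fun i => (hGdiag i) ▸ hgpos i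
  have hτpos : 0 < Matrix.trace G := by
    have : Matrix.trace G = ∑ i, G i i := rfl
    rw [this]
    exact Finset.sum_pos (fun i _ => hgpos' i) Finset.univ_nonempty
  have hτne : Matrix.trace G ≠ 0 := hτpos.ne'
  -- pseudoinverse property
  have hBBd : B * Bd = 1 := by
    have hrB : (B * Bᵀ).rank = n := by rw [Matrix.rank_self_mul_transpose]; exact hB
    have hUnit := rcd_full_rank_isUnit hrB
    rw [hBd, ← Matrix.mul_assoc]
    exact Matrix.mul_nonsing_inv _ ((Matrix.isUnit_iff_isUnit_det _).mp hUnit)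
  -- the update direction
  have hrow : ∀ i, (Aᵀ i ᵥ* (A * X * B - C)) ᵥ* Bd = (G * E) i := by
    intro i
    have h1 : A * X * B - C = A * E * B := by
      rw [hC, hE, Matrix.mul_sub, Matrix.sub_mul]
    rw [h1, Matrix.vecMul_vecMul]
    have h2 : A * E * B * Bd = A * E := by
      rw [Matrix.mul_assoc, hBBd, Matrix.mul_one]
    rw [h2, ← Matrix.mul_apply_eq_vecMul, ← Matrix.mul_assoc, ← hGdef]
  have hDi : ∀ i, Xp i - Xs = E - (1 / G i i) • vecMulVec (Pi.single i 1) ((G * E) i) := by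
    intro i
    rw [hXp i, hrow i, hGdiag i, hE]
    rw [sub_right_comm]
  -- per-index trace formula
  have hTi : ∀ i, Matrix.trace ((Xp i - Xs)ᵀ * G * (Xp i - Xs))
      = Matrix.trace (Eᵀ * G * E) - (∑ j, ((G*E) i j)^2) / G i i := by
    intro i
    rw [hDi i]
    exact rcd_key_trace G hGsym E i (hgpos' i)
  set T := Matrix.trace (Eᵀ * G * E) with hT
  set W := Matrix.trace (Eᵀ * (G * G) * E) with hW
  set lam := ⨅ k, hAA.eigenvalues k with hlam
  -- sum of squares equals trace of EᵀG²E
  have hSsum : ∑ i, ∑ j, ((G*E) i j)^2 = W := by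
    have hWe : Eᵀ * (G * G) * E = (G*E)ᵀ * (G*E) := by
      simp only [Matrix.transpose_mul, hGsym, Matrix.mul_assoc]
    rw [hW, hWe]
    rw [show Matrix.trace ((G*E)ᵀ * (G*E)) = ∑ j, ∑ i, ((G*E) i j)^2 by
      simp [Matrix.trace, Matrix.diag, Matrix.mul_apply, Matrix.transpose_apply, pow_two]
      refine Finset.sum_congr rfl fun x _ => Finset.sum_congr rfl fun y _ => ?_
      congr 1
      exact Finset.sum_congr rfl fun z _ => mul_comm _ _]
    exact Finset.sum_comm
  clear_value E
  -- the spectral bound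
  have hkey : lam * T ≤ W := by
    have hH := rcd_psd_sq_sub_smul hm hAA hGpsd
    have hPSD := hH.conjTranspose_mul_mul_same E
    rw [Matrix.conjTranspose_eq_transpose_of_trivial] at hPSD
    have htr := rcd_psd_trace_nonneg hPSD
    have hexp : Eᵀ * (G * G - lam • G) * E = Eᵀ * (G * G) * E - lam • (Eᵀ * G * E) := by
      rw [Matrix.mul_sub, Matrix.sub_mul, Matrix.mul_smul, Matrix.smul_mul]
    rw [hexp, Matrix.trace_sub, Matrix.trace_smul, smul_eq_mul, ← hW, ← hT] at htr
    linarith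
  -- assemble
  have hLHS : ∑ i, ((Aᵀ i ⬝ᵥ Aᵀ i) / Matrix.trace G) *
      Matrix.trace ((Xp i - Xs)ᵀ * G * (Xp i - Xs)) = T - W / Matrix.trace G := by
    have step1 : ∀ i, ((Aᵀ i ⬝ᵥ Aᵀ i) / Matrix.trace G) *
        Matrix.trace ((Xp i - Xs)ᵀ * G * (Xp i - Xs))
        = G i i * (T / Matrix.trace G) - (∑ j, ((G*E) i j)^2) / Matrix.trace G := by
      intro i
      rw [hTi i, ← hGdiag i]
      have hgne := (hgpos' i).ne'
      field_simp
    rw [Finset.sum_congr rfl fun i _ => step1 i]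
    rw [Finset.sum_sub_distrib, ← Finset.sum_mul, ← Finset.sum_div, hSsum]
    have hsumdiag : ∑ i, G i i = Matrix.trace G := rfl
    rw [hsumdiag]
    have : Matrix.trace G * (T / Matrix.trace G) = T := by field_simp
    rw [this]
  rw [hLHS]
  have hRHS : (1 - lam / Matrix.trace G) * T = T - lam * T / Matrix.trace G := by
    field_simp
  rw [hRHS]
  have h2 : lam * T / Matrix.trace G ≤ W / Matrix.trace G := by
    apply div_le_div_of_nonneg_right hkey hτpos.le
  linarith
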